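/- Let S(V) be a right-handed polynomial Hopf algebra, i.e., the polynomial algebra on V with a coproduct Δ making it a Hopf algebra such that the reduced coproduct satisfies Δ̄(V) ⊆ V ⊗ S(V). Then the composition of Δ̄ restricted to V with the projection S(V) → V, giving a map δ: V → V ⊗ V, defines a pre-Lie coalgebra structure on V; that is, the co-pre-Lie identity (δ⊗id)∘δ − (id⊗δ)∘δ = (id⊗τ)∘((δ⊗id)∘δ − (id⊗δ)∘δ) holds, where τ swaps the last two tensor factors. -/

import Mathlib

open TensorProduct MvPolynomial

set_option maxSynthPendingDepth 3
set_option synthInstance.maxHeartbeats 1000000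

variable {K σ : Type*} [Field K] [CharZero K]

/-- The reduced coproduct `Δ̄ : x ↦ Δ(x) − x⊗1 − 1⊗x` associated to a coproduct `Δ`
on the polynomial algebra `S(V) = K[X_i]`. -/
noncomputable def redCoproduct
    (Δ : MvPolynomial σ K →ₐ[K] MvPolynomial σ K ⊗[K] MvPolynomial σ K) :
    MvPolynomial σ K →ₗ[K] MvPolynomial σ K ⊗[K] MvPolynomial σ K :=
  Δ.toLinearMap - (TensorProduct.mk K (MvPolynomial σ K) (MvPolynomial σ K)).flip 1 -
    TensorProduct.mk K (MvPolynomial σ K) (MvPolynomial σ K) 1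

/-- The map `δ : V → V ⊗ V`, composition of the reduced coproduct with the projection
`S(V) → V` (the degree-one homogeneous component) in both factors. -/
noncomputable def copreLie
    (Δ : MvPolynomial σ K →ₐ[K] MvPolynomial σ K ⊗[K] MvPolynomial σ K) :
    MvPolynomial σ K →ₗ[K] MvPolynomial σ K ⊗[K] MvPolynomial σ K :=
  TensorProduct.map (homogeneousComponent 1) (homogeneousComponent 1) ∘ₗ redCoproduct Δ

/-- The co-pre-Lie defect `(δ⊗id)∘δ − (id⊗δ)∘δ` (with the first term reassociated). -/
noncomputable def copreLieDefect
    (Δ : MvPolynomial σ K →ₐ[K] MvPolynomial σ K ⊗[K] MvPolynomial σ K) :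
    MvPolynomial σ K →ₗ[K] MvPolynomial σ K ⊗[K] (MvPolynomial σ K ⊗[K] MvPolynomial σ K) :=
  ((TensorProduct.assoc K (MvPolynomial σ K) (MvPolynomial σ K)
        (MvPolynomial σ K)).toLinearMap ∘ₗ
      TensorProduct.map (copreLie Δ)
        (LinearMap.id : MvPolynomial σ K →ₗ[K] MvPolynomial σ K) ∘ₗ copreLie Δ) -
    (TensorProduct.map (LinearMap.id : MvPolynomial σ K →ₗ[K] MvPolynomial σ K)
        (copreLie Δ) ∘ₗ copreLie Δ)


set_option linter.unusedSectionVars false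

local notation "π" => (homogeneousComponent 1 : MvPolynomial σ K →ₗ[K] MvPolynomial σ K)

private lemma degAdd (a b : σ →₀ ℕ) : (a + b).degree = a.degree + b.degree := by
  simp [Finsupp.degree_eq_weight_one, map_add]

private lemma hcMonomial (n : ℕ) (d : σ →₀ ℕ) (c : K) :
    homogeneousComponent n (monomial d c) =
      if n = d.degree then monomial d c else 0 := by
  by_cases hc : c = 0
  · subst hc; simp
  · exact homogeneousComponent_of_mem
      ((mem_homogeneousSubmodule _ _).2 (isHomogeneous_monomial c rfl))

private lemma pi_one : homogeneousComponent 1 (1 : MvPolynomial σ K) = 0 := by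
  have : (1 : MvPolynomial σ K) = monomial 0 1 := by simp
  rw [this, hcMonomial]
  simp

private lemma pi_X (i : σ) : homogeneousComponent 1 (X i : MvPolynomial σ K) = X i := by
  rw [homogeneousComponent_of_mem ((mem_homogeneousSubmodule _ _).2 (isHomogeneous_X K i))]
  simp

private lemma pi_mul (u w : MvPolynomial σ K) :
    homogeneousComponent 1 (u * w) =
      constantCoeff u • homogeneousComponent 1 w +
        constantCoeff w • homogeneousComponent 1 u := by
  classical
  induction u using MvPolynomial.induction_on' with
  | add p q hp hq =>
    simp only [add_mul, map_add, hp, hq, smul_add, add_smul]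
    abel
  | monomial a c =>
    induction w using MvPolynomial.induction_on' with
    | add p q hp hq =>
      simp only [mul_add, map_add, hp, hq, smul_add, add_smul]
      abel
    | monomial b e =>
      rw [monomial_mul]
      by_cases ha : a = 0
      · subst ha
        by_cases hb : b = 0
        · subst hb
          rw [zero_add, hcMonomial, hcMonomial, hcMonomial]
          simp [map_zero]
        · simp only [zero_add, hcMonomial, constantCoeff_monomial, if_neg hb,
            map_zero]
          split_ifs <;> simp [smul_monomial]
      · by_cases hb : b = 0
        · subst hb
          simp only [add_zero, hcMonomial, constantCoeff_monomial, if_neg ha,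
            map_zero]
          split_ifs <;> simp [smul_monomial, mul_comm]
        · have hda : a.degree ≠ 0 := fun h => ha ((Finsupp.degree_eq_zero_iff a).1 h)
          have hdb : b.degree ≠ 0 := fun h => hb ((Finsupp.degree_eq_zero_iff b).1 h)
          have : (1 : ℕ) ≠ (a + b).degree := by rw [degAdd]; omega
          rw [hcMonomial, if_neg this, hcMonomial, hcMonomial,
            constantCoeff_monomial, constantCoeff_monomial, if_neg ha, if_neg hb]
          simp

private noncomputable def epsL :
    MvPolynomial σ K ⊗[K] MvPolynomial σ K →ₗ[K] MvPolynomial σ K :=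
  (TensorProduct.lid K (MvPolynomial σ K)).toLinearMap ∘ₗ
    TensorProduct.map (MvPolynomial.aeval (fun _ : σ => (0 : K))).toLinearMap LinearMap.id

private noncomputable def epsR :
    MvPolynomial σ K ⊗[K] MvPolynomial σ K →ₗ[K] MvPolynomial σ K :=
  (TensorProduct.rid K (MvPolynomial σ K)).toLinearMap ∘ₗ
    TensorProduct.map LinearMap.id (MvPolynomial.aeval (fun _ : σ => (0 : K))).toLinearMap

@[simp] private lemma epsL_tmul (a b : MvPolynomial σ K) :
    epsL (a ⊗ₜ[K] b) = constantCoeff a • b := by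
  simp [epsL]

@[simp] private lemma epsR_tmul (a b : MvPolynomial σ K) :
    epsR (a ⊗ₜ[K] b) = constantCoeff b • a := by
  simp [epsR]

private lemma mapππ_mul (x y : MvPolynomial σ K ⊗[K] MvPolynomial σ K) :
    TensorProduct.map π π (x * y) =
      constantCoeff (epsL x) • TensorProduct.map π π y +
        constantCoeff (epsL y) • TensorProduct.map π π x +
        π (epsR y) ⊗ₜ[K] π (epsL x) + π (epsR x) ⊗ₜ[K] π (epsL y) := by
  induction x using TensorProduct.induction_on with
  | zero => simp
  | add x₁ x₂ h1 h2 =>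
    simp only [add_mul, map_add, h1, h2, add_smul, smul_add, tmul_add, add_tmul]
    abel
  | tmul a b =>
    induction y using TensorProduct.induction_on with
    | zero => simp
    | add y₁ y₂ h1 h2 =>
      simp only [mul_add, map_add, h1, h2, add_smul, smul_add, tmul_add, add_tmul]
      abel
    | tmul c d =>
      simp only [Algebra.TensorProduct.tmul_mul_tmul, map_tmul, epsL_tmul, epsR_tmul]
      rw [pi_mul, pi_mul]
      simp only [map_smul, constantCoeff_smul, smul_eq_mul, tmul_add, add_tmul,
        ← smul_tmul', tmul_smul]
      module

variable (Δ : MvPolynomial σ K →ₐ[K] MvPolynomial σ K ⊗[K] MvPolynomial σ K)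

private lemma mapππ_comp_Δ :
    TensorProduct.map π π ∘ₗ Δ.toLinearMap = copreLie Δ := by
  apply LinearMap.ext
  intro x
  simp only [copreLie, redCoproduct, LinearMap.comp_apply, LinearMap.sub_apply,
    LinearMap.flip_apply, TensorProduct.mk_apply, map_sub, map_tmul, pi_one,
    tmul_zero, zero_tmul, sub_zero, AlgHom.toLinearMap_apply, LinearMap.id_coe, id_eq]

private lemma copreLie_apply (x : MvPolynomial σ K) :
    copreLie Δ x = TensorProduct.map π π (Δ x) :=
  (LinearMap.congr_fun (mapππ_comp_Δ Δ) x).symm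

private lemma delta_one : copreLie Δ (1 : MvPolynomial σ K) = 0 := by
  rw [copreLie_apply, map_one, Algebra.TensorProduct.one_def, map_tmul, pi_one, zero_tmul]

private lemma delta_mul
    (hcounitl : ∀ x : MvPolynomial σ K,
      (TensorProduct.lid K (MvPolynomial σ K))
        (TensorProduct.map (MvPolynomial.aeval (fun _ : σ => (0 : K))).toLinearMap
          LinearMap.id (Δ x)) = x)
    (hcounitr : ∀ x : MvPolynomial σ K,
      (TensorProduct.rid K (MvPolynomial σ K))
        (TensorProduct.map LinearMap.id
          (MvPolynomial.aeval (fun _ : σ => (0 : K))).toLinearMap (Δ x)) = x)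
    (p q : MvPolynomial σ K) :
    copreLie Δ (p * q) = constantCoeff p • copreLie Δ q + constantCoeff q • copreLie Δ p +
      π q ⊗ₜ[K] π p + π p ⊗ₜ[K] π q := by
  have hL : ∀ x, epsL (Δ x) = x := fun x => by
    simpa only [epsL, LinearMap.comp_apply, LinearEquiv.coe_coe] using hcounitl x
  have hR : ∀ x, epsR (Δ x) = x := fun x => by
    simpa only [epsR, LinearMap.comp_apply, LinearEquiv.coe_coe] using hcounitr x
  rw [copreLie_apply, map_mul, mapππ_mul, hL, hL, hR, hR, ← copreLie_apply, ← copreLie_apply]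

private lemma pi_C (a : K) : homogeneousComponent 1 (C a : MvPolynomial σ K) = 0 := by
  rw [C_apply, homogeneousComponent_of_mem
    ((mem_homogeneousSubmodule _ _).2 (isHomogeneous_monomial a ((Finsupp.degree_eq_zero_iff 0).2 rfl)))]
  simp

private lemma eta_symm
    (hcounitl : ∀ x : MvPolynomial σ K,
      (TensorProduct.lid K (MvPolynomial σ K))
        (TensorProduct.map (MvPolynomial.aeval (fun _ : σ => (0 : K))).toLinearMap
          LinearMap.id (Δ x)) = x)
    (hcounitr : ∀ x : MvPolynomial σ K,
      (TensorProduct.rid K (MvPolynomial σ K))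
        (TensorProduct.map LinearMap.id
          (MvPolynomial.aeval (fun _ : σ => (0 : K))).toLinearMap (Δ x)) = x)
    (w : MvPolynomial σ K) :
    (TensorProduct.comm K (MvPolynomial σ K) (MvPolynomial σ K))
        (copreLie Δ (w - homogeneousComponent 1 w)) =
      copreLie Δ (w - homogeneousComponent 1 w) := by
  induction w using MvPolynomial.induction_on with
  | C a =>
    have hCa : (C a : MvPolynomial σ K) = a • 1 := by
      rw [← algebraMap_eq, Algebra.algebraMap_eq_smul_one]
    rw [pi_C, sub_zero, hCa, map_smul, delta_one, smul_zero, map_zero]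
  | add p q hp hq =>
    have : p + q - homogeneousComponent 1 (p + q) =
        (p - homogeneousComponent 1 p) + (q - homogeneousComponent 1 q) := by
      rw [map_add]; abel
    rw [this, map_add, map_add, hp, hq]
  | mul_X p i hp =>
    have hπ : homogeneousComponent 1 (p * X i) = constantCoeff p • X i := by
      rw [pi_mul, pi_X, constantCoeff_X]
      simp
    have hδ : copreLie Δ (p * X i - homogeneousComponent 1 (p * X i)) =
        X i ⊗ₜ[K] π p + π p ⊗ₜ[K] X i := by
      rw [map_sub, delta_mul Δ hcounitl hcounitr, hπ, map_smul, pi_X, constantCoeff_X]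
      simp only [zero_smul, zero_add]
      abel
    rw [hδ, map_add, comm_tmul, comm_tmul, add_comm]

private lemma mapmap {M N P Q M' N' : Type*} [AddCommMonoid M] [AddCommMonoid N]
    [AddCommMonoid P] [AddCommMonoid Q] [AddCommMonoid M'] [AddCommMonoid N']
    [Module K M] [Module K N] [Module K P] [Module K Q] [Module K M'] [Module K N']
    (f₂ : P →ₗ[K] M') (g₂ : Q →ₗ[K] N') (f₁ : M →ₗ[K] P) (g₁ : N →ₗ[K] Q)
    (y : M ⊗[K] N) :
    TensorProduct.map f₂ g₂ (TensorProduct.map f₁ g₁ y) =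
      TensorProduct.map (f₂ ∘ₗ f₁) (g₂ ∘ₗ g₁) y := by
  rw [TensorProduct.map_comp]; rfl

private lemma map_sub_right {M N P Q : Type*} [AddCommGroup M] [AddCommGroup N]
    [AddCommGroup P] [AddCommGroup Q]
    [Module K M] [Module K N] [Module K P] [Module K Q]
    (f : M →ₗ[K] P) (g h : N →ₗ[K] Q) :
    TensorProduct.map f (g - h) = TensorProduct.map f g - TensorProduct.map f h := by
  apply TensorProduct.ext'
  intro m n
  simp [tmul_sub]

/-- Let `S(V)` be a right-handed polynomial Hopf algebra: the polynomial algebra `K[X_i]`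
(with `V` its degree-one part) equipped with a coproduct `Δ` (an algebra morphism, coassociative
and counital with counit the projection onto `S^0(V) = K`) making it a Hopf algebra, such that
the reduced coproduct satisfies `Δ̄(V) ⊆ V ⊗ S(V)`.  Then `δ : V → V ⊗ V` satisfies the
co-pre-Lie identity `(δ⊗id)∘δ − (id⊗δ)∘δ = (id⊗τ)∘((δ⊗id)∘δ − (id⊗δ)∘δ)` on `V`, where `τ`
swaps the last two tensor factors; i.e. `δ` defines a pre-Lie coalgebra structure on `V`. -/
theorem rightHanded_gives_coPreLie
    (Δ : MvPolynomial σ K →ₐ[K] MvPolynomial σ K ⊗[K] MvPolynomial σ K)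
    (hcoassoc : ∀ x : MvPolynomial σ K,
      (TensorProduct.assoc K (MvPolynomial σ K) (MvPolynomial σ K) (MvPolynomial σ K))
          (TensorProduct.map Δ.toLinearMap LinearMap.id (Δ x)) =
        TensorProduct.map LinearMap.id Δ.toLinearMap (Δ x))
    (hcounitl : ∀ x : MvPolynomial σ K,
      (TensorProduct.lid K (MvPolynomial σ K))
        (TensorProduct.map (MvPolynomial.aeval (fun _ : σ => (0 : K))).toLinearMap
          LinearMap.id (Δ x)) = x)
    (hcounitr : ∀ x : MvPolynomial σ K,
      (TensorProduct.rid K (MvPolynomial σ K))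
        (TensorProduct.map LinearMap.id
          (MvPolynomial.aeval (fun _ : σ => (0 : K))).toLinearMap (Δ x)) = x)
    (hrh : ∀ v ∈ homogeneousSubmodule σ K 1,
      redCoproduct Δ v ∈
        LinearMap.range (TensorProduct.map (homogeneousSubmodule σ K 1).subtype
          (LinearMap.id : MvPolynomial σ K →ₗ[K] MvPolynomial σ K))) :
    ∀ v ∈ homogeneousSubmodule σ K 1,
      copreLieDefect Δ v =
        TensorProduct.map LinearMap.id
          (TensorProduct.comm K (MvPolynomial σ K) (MvPolynomial σ K)).toLinearMap
          (copreLieDefect Δ v) := by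
  intro v hv
  obtain ⟨y, hy⟩ := hrh v hv
  set ι := (homogeneousSubmodule σ K 1).subtype with hιdef
  have hπιop : π ∘ₗ ι = ι := by
    apply LinearMap.ext; intro u
    simp only [LinearMap.comp_apply, hιdef, Submodule.subtype_apply]
    rw [homogeneousComponent_of_mem u.2]
    simp
  have hΔv : Δ v = v ⊗ₜ[K] 1 + 1 ⊗ₜ[K] v + TensorProduct.map ι LinearMap.id y := by
    have h0 : redCoproduct Δ v = Δ v - v ⊗ₜ[K] 1 - 1 ⊗ₜ[K] v := by
      simp only [redCoproduct, LinearMap.sub_apply, LinearMap.flip_apply,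
        TensorProduct.mk_apply, AlgHom.toLinearMap_apply]
    rw [hy, h0]; abel
  have hδv : copreLie Δ v = TensorProduct.map ι π y := by
    rw [copreLie_apply, hΔv, map_add, map_add, map_tmul, map_tmul, pi_one,
      tmul_zero, zero_tmul, zero_add, zero_add, mapmap, hπιop, LinearMap.comp_id]
  have h1 := congrArg (TensorProduct.map π (TensorProduct.map π π)) (hcoassoc v)
  rw [map_map_assoc, mapmap, mapmap, mapππ_comp_Δ, LinearMap.comp_id] at h1
  rw [hΔv] at h1
  simp only [map_add, map_tmul, pi_one, delta_one, tmul_zero, zero_tmul, zero_add,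
    add_zero, map_zero, mapmap, LinearMap.comp_id, LinearMap.id_comp, hπιop] at h1
  -- h1 : assoc (map (copreLie Δ ∘ₗ ι) π y) = map ι (copreLie Δ) y
  have hdef : copreLieDefect Δ v =
      TensorProduct.map ι (copreLie Δ - copreLie Δ ∘ₗ π) y := by
    rw [map_sub_right]
    simp only [copreLieDefect, LinearMap.sub_apply, LinearMap.comp_apply,
      LinearEquiv.coe_coe]
    rw [hδv, mapmap, mapmap, LinearMap.id_comp, LinearMap.id_comp, h1]
  have hη : (TensorProduct.comm K (MvPolynomial σ K) (MvPolynomial σ K)).toLinearMap ∘ₗ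
        (copreLie Δ - copreLie Δ ∘ₗ π) =
      copreLie Δ - copreLie Δ ∘ₗ π := by
    apply LinearMap.ext; intro w
    have h2 := eta_symm Δ hcounitl hcounitr w
    rw [map_sub] at h2
    simpa only [LinearMap.comp_apply, LinearMap.sub_apply, LinearEquiv.coe_coe] using h2
  rw [hdef]
  conv_rhs => rw [mapmap, LinearMap.id_comp, hη]
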